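/- Let H be a Hilbert space, and x_1, …, x_t ∈ H with ‖x_i‖ ≤ L. Let λ > 0, Λ_0 = λ I, and Λ_i = Λ_0 + Σ_{j≤i} x_j x_j*. Let K_t ∈ ℝ^{t×t} be the Gram matrix [K_t]_{ij} = ⟨x_i, x_j⟩. Then Σ_{i=1}^t min{1, ⟨x_i, Λ_{i−1}^{-1} x_i⟩} ≤ 2 log det(I + K_t / λ). -/

import Mathlib

open scoped RealInnerProductSpace Matrix BigOperators

private lemma min_le_two_log {q : ℝ} (hq : 0 ≤ q) : min 1 q ≤ 2 * Real.log (1 + q) := by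
  have h1 : (0:ℝ) < 1 + q := by linarith
  rcases le_total 1 q with h | h
  · rw [min_eq_left h]
    have h2 : Real.log 2 ≤ Real.log (1+q) := Real.log_le_log (by norm_num) (by linarith)
    have h3 := Real.log_two_gt_d9
    linarith
  · rw [min_eq_right h]
    have hlog : q/(1+q) ≤ Real.log (1+q) := by
      have h4 := Real.one_sub_inv_le_log_of_pos h1
      have e : 1 - (1+q)⁻¹ = q/(1+q) := by field_simp; ring
      linarith [e ▸ h4]
    rw [div_le_iff₀ h1] at hlog
    nlinarith [Real.log_nonneg (by linarith : (1:ℝ) ≤ 1+q)]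

private lemma det_add_vecMulVec {n : ℕ} (A : Matrix (Fin n) (Fin n) ℝ) (u w : Fin n → ℝ)
    (h : A *ᵥ u = w) :
    (A + Matrix.vecMulVec w w).det = A.det * (1 + w ⬝ᵥ u) := by
  have key : A + Matrix.vecMulVec w w = A * (1 + Matrix.vecMulVec u w) := by
    rw [Matrix.mul_add, Matrix.mul_one]
    congr 1
    subst h
    ext a b
    simp [Matrix.mul_apply, Matrix.vecMulVec_apply, Matrix.mulVec, dotProduct,
      Finset.sum_mul, mul_assoc]
  rw [key, Matrix.det_mul, Matrix.vecMulVec_eq Unit, Matrix.det_one_add_replicateCol_mul_replicateRow]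

private lemma gram_det {n t : ℕ} (lam : ℝ) (v u : Fin t → Fin n → ℝ)
    (hu : ∀ i : Fin t,
      (lam • (1 : Matrix (Fin n) (Fin n) ℝ)
        + ∑ j ∈ Finset.univ.filter (fun j => j < i), Matrix.vecMulVec (v j) (v j)) *ᵥ u i
        = v i) :
    (lam • (1 : Matrix (Fin n) (Fin n) ℝ) + ∑ j, Matrix.vecMulVec (v j) (v j)).det
      = lam ^ n * ∏ i, (1 + v i ⬝ᵥ u i) := by
  set P : ℕ → Matrix (Fin n) (Fin n) ℝ := fun k =>
    lam • (1 : Matrix (Fin n) (Fin n) ℝ)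
      + ∑ j ∈ Finset.univ.filter (fun j : Fin t => (j : ℕ) < k), Matrix.vecMulVec (v j) (v j)
    with hP
  have claim : ∀ k, k ≤ t → (P k).det
      = lam ^ n * ∏ j ∈ Finset.univ.filter (fun j : Fin t => (j : ℕ) < k), (1 + v j ⬝ᵥ u j) := by
    intro k
    induction k with
    | zero =>
      intro _
      have he : Finset.univ.filter (fun j : Fin t => (j : ℕ) < 0) = ∅ := by
        ext j; simp
      simp [hP, he, Matrix.det_smul]
    | succ k ih =>
      intro hk
      have hkt : k < t := hk
      set i : Fin t := ⟨k, hkt⟩ with hi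
      have hins : Finset.univ.filter (fun j : Fin t => (j : ℕ) < k + 1)
          = insert i (Finset.univ.filter (fun j : Fin t => (j : ℕ) < k)) := by
        ext j
        simp only [Finset.mem_filter, Finset.mem_univ, true_and, Finset.mem_insert]
        constructor
        · intro hj
          rcases Nat.lt_succ_iff_lt_or_eq.mp hj with h | h
          · exact Or.inr h
          · exact Or.inl (Fin.ext h)
        · rintro (rfl | hj)
          · exact Nat.lt_succ_self k
          · exact Nat.lt_succ_of_lt hj
      have hnotmem : i ∉ Finset.univ.filter (fun j : Fin t => (j : ℕ) < k) := by
        simp [hi]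
      have hPk : P (k+1) = P k + Matrix.vecMulVec (v i) (v i) := by
        rw [hP]
        simp only [hins, Finset.sum_insert hnotmem]
        abel
      have hfilt : Finset.univ.filter (fun j : Fin t => j < i)
          = Finset.univ.filter (fun j : Fin t => (j : ℕ) < k) := by
        ext j; simp [Fin.lt_def, hi]
      rw [hPk, det_add_vecMulVec _ (u i) (v i) (by simp only [hP]; rw [← hfilt]; exact hu i),
        ih (le_of_lt hkt), hins, Finset.prod_insert hnotmem]
      ring
  have hfin : Finset.univ.filter (fun j : Fin t => (j : ℕ) < t) = Finset.univ := by
    ext j; simp [j.isLt]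
  have := claim t le_rfl
  rw [hfin] at this
  simpa [hP, hfin] using this

private lemma parseval {E : Type*} [NormedAddCommGroup E] [InnerProductSpace ℝ E]
    {ι : Type*} [Fintype ι] (b : OrthonormalBasis ι ℝ E) (a c : E) :
    ⟪a, c⟫ = ∑ k, ⟪b k, a⟫ * ⟪b k, c⟫ :=
  calc ⟪a, c⟫ = ⟪b.repr a, b.repr c⟫ := (b.repr.inner_map_map a c).symm
    _ = ∑ k, b.repr a k * b.repr c k := by
        simp only [PiLp.inner_apply, RCLike.inner_apply, conj_trivial]
        exact Finset.sum_congr rfl fun _ _ => mul_comm _ _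
    _ = ∑ k, ⟪b k, a⟫ * ⟪b k, c⟫ := by simp [b.repr_apply_apply]

private lemma helper_mulVec {n t : ℕ} (lam : ℝ) (v : Fin t → Fin n → ℝ) (s : Finset (Fin t))
    (w : Fin n → ℝ) :
    (lam • (1 : Matrix (Fin n) (Fin n) ℝ) + ∑ j ∈ s, Matrix.vecMulVec (v j) (v j)) *ᵥ w
      = lam • w + ∑ j ∈ s, (v j ⬝ᵥ w) • v j := by
  rw [Matrix.add_mulVec, Matrix.smul_mulVec, Matrix.one_mulVec]
  congr 1
  ext k
  simp only [Matrix.mulVec, dotProduct, Matrix.sum_apply, Matrix.vecMulVec_apply,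
    Finset.sum_apply, Finset.sum_mul, Pi.smul_apply, smul_eq_mul, Finset.mul_sum]
  rw [Finset.sum_comm]
  exact Finset.sum_congr rfl fun j _ => Finset.sum_congr rfl fun m _ => by ring

/-- kernelized elliptical potential lemma: with `‖x i‖ ≤ L`,
`Λ_{i−1} = λ I + ∑_{j<i} x j (x j)*` (whose inverse is `Λinv i`) and `K` the Gram
matrix, `∑ i, min 1 ⟪x i, Λ_{i−1}⁻¹ (x i)⟫ ≤ 2 log det (I + K/λ)`. -/
theorem stmt8 {H : Type*} [NormedAddCommGroup H] [InnerProductSpace ℝ H]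
    {t : ℕ} (x : Fin t → H) (L : ℝ) (hL : ∀ i, ‖x i‖ ≤ L)
    (lam : ℝ) (hlam : 0 < lam)
    (K : Matrix (Fin t) (Fin t) ℝ) (hK : ∀ i j, K i j = ⟪x i, x j⟫)
    (Λinv : Fin t → H →ₗ[ℝ] H)
    (hΛinv₁ : ∀ (i : Fin t) (θ : H),
      Λinv i (lam • θ + ∑ j ∈ Finset.univ.filter (fun j => j < i), ⟪x j, θ⟫ • x j) = θ)
    (hΛinv₂ : ∀ (i : Fin t) (θ : H),
      lam • Λinv i θ
        + ∑ j ∈ Finset.univ.filter (fun j => j < i), ⟪x j, Λinv i θ⟫ • x j = θ) :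
    ∑ i, min 1 ⟪x i, Λinv i (x i)⟫
      ≤ 2 * Real.log ((1 + lam⁻¹ • K : Matrix (Fin t) (Fin t) ℝ).det) := by
  classical
  have hlam' : lam ≠ 0 := ne_of_gt hlam
  -- nonnegativity of the quadratic forms
  have hq0 : ∀ i, 0 ≤ ⟪x i, Λinv i (x i)⟫ := by
    intro i
    have h2 := hΛinv₂ i (x i)
    have expand : ⟪lam • Λinv i (x i) + ∑ j ∈ Finset.univ.filter (fun j => j < i),
          ⟪x j, Λinv i (x i)⟫ • x j, Λinv i (x i)⟫
        = lam * ⟪Λinv i (x i), Λinv i (x i)⟫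
          + ∑ j ∈ Finset.univ.filter (fun j => j < i), ⟪x j, Λinv i (x i)⟫ ^ 2 := by
      rw [inner_add_left, real_inner_smul_left, sum_inner]
      congr 1
      refine Finset.sum_congr rfl fun j _ => ?_
      rw [real_inner_smul_left]; ring
    rw [h2] at expand
    rw [expand]
    exact add_nonneg (mul_nonneg hlam.le real_inner_self_nonneg)
      (Finset.sum_nonneg fun j _ => sq_nonneg _)
  -- the span of the data, a finite-dimensional subspace
  set V := Submodule.span ℝ (Set.range x) with hVdef
  haveI : FiniteDimensional ℝ V := FiniteDimensional.span_of_finite ℝ (Set.finite_range x)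
  set b : OrthonormalBasis (Fin (Module.finrank ℝ V)) ℝ V := stdOrthonormalBasis ℝ V with hb
  have hxV : ∀ i, x i ∈ V := fun i => Submodule.subset_span ⟨i, rfl⟩
  have hyV : ∀ i, Λinv i (x i) ∈ V := by
    intro i
    have h2 := hΛinv₂ i (x i)
    have e2 : lam • Λinv i (x i)
        = x i - ∑ j ∈ Finset.univ.filter (fun j => j < i), ⟪x j, Λinv i (x i)⟫ • x j :=
      eq_sub_of_add_eq h2
    have e : Λinv i (x i)
        = lam⁻¹ • (x i - ∑ j ∈ Finset.univ.filter (fun j => j < i),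
            ⟪x j, Λinv i (x i)⟫ • x j) := by
      rw [← e2, inv_smul_smul₀ hlam']
    rw [e]
    exact V.smul_mem _ (V.sub_mem (hxV i) (V.sum_mem fun j _ => V.smul_mem _ (hxV j)))
  -- coordinates of the data and of the solutions
  obtain ⟨v, hv⟩ : ∃ v : Fin t → Fin (Module.finrank ℝ V) → ℝ,
      ∀ i k, v i k = ⟪((b k : V) : H), x i⟫ := ⟨_, fun _ _ => rfl⟩
  obtain ⟨u, hu⟩ : ∃ u : Fin t → Fin (Module.finrank ℝ V) → ℝ,
      ∀ i k, u i k = ⟪((b k : V) : H), Λinv i (x i)⟫ := ⟨_, fun _ _ => rfl⟩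
  -- Parseval for elements of V
  have hPar : ∀ (a c : H), a ∈ V → c ∈ V →
      ⟪a, c⟫ = ∑ k, ⟪((b k : V) : H), a⟫ * ⟪((b k : V) : H), c⟫ := by
    intro a c ha hc
    have h := parseval b ⟨a, ha⟩ ⟨c, hc⟩
    simpa only [Submodule.coe_inner] using h
  have hdot : ∀ i j, ⟪x i, Λinv j (x j)⟫ = v i ⬝ᵥ u j := by
    intro i j
    rw [hPar _ _ (hxV i) (hyV j)]
    simp [dotProduct, hv, hu]
  have hdotx : ∀ i j, ⟪x i, x j⟫ = v i ⬝ᵥ v j := by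
    intro i j
    rw [hPar _ _ (hxV i) (hxV j)]
    simp [dotProduct, hv]
  -- the key linear equations, in coordinates
  have hNu : ∀ i, (lam • (1 : Matrix (Fin (Module.finrank ℝ V)) (Fin (Module.finrank ℝ V)) ℝ)
      + ∑ j ∈ Finset.univ.filter (fun j => j < i), Matrix.vecMulVec (v j) (v j)) *ᵥ u i
      = v i := by
    intro i
    rw [helper_mulVec]
    funext k
    simp only [Pi.add_apply, Pi.smul_apply, Finset.sum_apply, smul_eq_mul]
    have h3 := congrArg (fun z => ⟪((b k : V) : H), z⟫) (hΛinv₂ i (x i))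
    simp only [inner_add_right, real_inner_smul_right, inner_sum] at h3
    simp only [hu, hv]
    rw [← h3]
    congr 1
    exact Finset.sum_congr rfl fun j _ => by rw [← hdot j i]
  -- the Gram matrix in coordinates
  set M : Matrix (Fin (Module.finrank ℝ V)) (Fin t) ℝ := Matrix.of fun k i => v i k with hM
  have hK' : K = Mᵀ * M := by
    ext i j
    rw [hK i j, hdotx i j]
    simp [hM, Matrix.mul_apply, dotProduct]
  have hMM : M * Mᵀ = ∑ j, Matrix.vecMulVec (v j) (v j) := by
    ext a c
    simp [hM, Matrix.mul_apply, Matrix.sum_apply, Matrix.vecMulVec_apply]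
  -- the determinant identity
  have hdet : (1 + lam⁻¹ • K : Matrix (Fin t) (Fin t) ℝ).det = ∏ i, (1 + v i ⬝ᵥ u i) := by
    have e1 : (1 + lam⁻¹ • K : Matrix (Fin t) (Fin t) ℝ) = 1 + (lam⁻¹ • Mᵀ) * M := by
      rw [hK', Matrix.smul_mul]
    rw [e1, Matrix.det_one_add_mul_comm]
    have e2 : (1 : Matrix (Fin (Module.finrank ℝ V)) (Fin (Module.finrank ℝ V)) ℝ)
        + M * (lam⁻¹ • Mᵀ)
        = lam⁻¹ • (lam • (1 : Matrix (Fin (Module.finrank ℝ V)) (Fin (Module.finrank ℝ V)) ℝ)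
            + ∑ j, Matrix.vecMulVec (v j) (v j)) := by
      rw [smul_add, smul_smul, inv_mul_cancel₀ hlam', one_smul, ← hMM, Matrix.mul_smul]
    rw [e2, Matrix.det_smul, gram_det lam v u hNu, Fintype.card_fin, ← mul_assoc,
      ← mul_pow, inv_mul_cancel₀ hlam', one_pow, one_mul]
  -- conclusion
  have hq : ∀ i, ⟪x i, Λinv i (x i)⟫ = v i ⬝ᵥ u i := fun i => hdot i i
  have hpos : ∀ i : Fin t, (0:ℝ) < 1 + v i ⬝ᵥ u i := by
    intro i
    have h := hq0 i
    rw [hq i] at h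
    linarith
  calc ∑ i, min 1 ⟪x i, Λinv i (x i)⟫
      ≤ ∑ i, 2 * Real.log (1 + ⟪x i, Λinv i (x i)⟫) :=
        Finset.sum_le_sum fun i _ => min_le_two_log (hq0 i)
    _ = 2 * ∑ i, Real.log (1 + v i ⬝ᵥ u i) := by
        rw [Finset.mul_sum]
        exact Finset.sum_congr rfl fun i _ => by rw [hq i]
    _ = 2 * Real.log (∏ i, (1 + v i ⬝ᵥ u i)) := by
        rw [Real.log_prod fun i _ => ne_of_gt (hpos i)]
    _ = 2 * Real.log ((1 + lam⁻¹ • K : Matrix (Fin t) (Fin t) ℝ).det) := by rw [hdet]
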